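/- Let α = Pa²/σ² > 0 and β = Qb²/σ² > 0, and suppose (√P·a + √Q·b)² ≥ ρσ² (scheme 4 feasible) and ρ ≤ ((1 + α + 3β) − √((1 − α + β)² + 4α) + 2√W)/(1 + α − β + √((1 − α + β)² + 4α)) with W = 2β(1 + α + β − √((1 − α + β)² + 4α)) (condition (20)). Then γ*₁,S4 ≥ γ*₁,S3, where γ*₁,S4 = Pa²/σ² if Qb²/(σ² + Pa²) ≥ ρ and γ*₁,S4 = a²(P − v₂*²)/σ² with v₂* = (√(Pρ(1+ρ)a² + ρ(1+ρ)σ² − ρQb²) − √Q·b)/(a(1+ρ)) otherwise, and γ*₁,S3 = (−(σ² + Qb² − Pa²) + √((σ² + Qb² − Pa²)² + 4σ²Pa²))/(2σ²). -/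

import Mathlib

private lemma stmt19_aux (a b P Q σ2 : ℝ) (ha : 0 < a) (hb : 0 < b) (hP : 0 < P)
    (hQ : 0 < Q) (hσ : 0 < σ2) (γS3 : ℝ)
    (hγ3 : γS3 = (-(σ2 + Q * b ^ 2 - P * a ^ 2) +
      Real.sqrt ((σ2 + Q * b ^ 2 - P * a ^ 2) ^ 2 + 4 * σ2 * P * a ^ 2)) /
      (2 * σ2)) :
    σ2 * γS3 ^ 2 + (σ2 + Q * b ^ 2 - P * a ^ 2) * γS3 = P * a ^ 2 ∧
    0 ≤ γS3 ∧ σ2 * γS3 ≤ P * a ^ 2 := by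
  set D := σ2 + Q * b ^ 2 - P * a ^ 2 with hD
  have hrad : (0:ℝ) ≤ D ^ 2 + 4 * σ2 * P * a ^ 2 := by positivity
  have hr2 : Real.sqrt (D ^ 2 + 4 * σ2 * P * a ^ 2) ^ 2 = D ^ 2 + 4 * σ2 * P * a ^ 2 :=
    Real.sq_sqrt hrad
  have hr0 : 0 ≤ Real.sqrt (D ^ 2 + 4 * σ2 * P * a ^ 2) := Real.sqrt_nonneg _
  have hquad : σ2 * γS3 ^ 2 + D * γS3 = P * a ^ 2 := by
    rw [hγ3]; field_simp; rw [show D ^ 2 + σ2 * 4 * P * a ^ 2 = D ^ 2 + 4 * σ2 * P * a ^ 2 by ring]; nlinarith [hr2]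
  have hg0 : 0 ≤ γS3 := by
    rw [hγ3]
    have hDr : D ≤ Real.sqrt (D ^ 2 + 4 * σ2 * P * a ^ 2) := by
      nlinarith [hr2, hr0, sq_nonneg (Real.sqrt (D ^ 2 + 4 * σ2 * P * a ^ 2) - D),
        mul_pos (mul_pos hσ hP) (pow_pos ha 2)]
    apply div_nonneg (by linarith) (by linarith)
  have hgle : σ2 * γS3 ≤ P * a ^ 2 := by
    nlinarith [hquad, hg0, mul_pos hQ (pow_pos hb 2),
      mul_nonneg (mul_pos hQ (pow_pos hb 2)).le hg0, sq_nonneg γS3]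
  exact ⟨hquad, hg0, hgle⟩

private lemma stmt19_aux2 (a b P Q σ2 ρ γS3 u v v2star : ℝ)
    (ha : 0 < a) (hσ : 0 < σ2) (hρ : 0 < ρ)
    (hg0 : 0 ≤ γS3)
    (hu2 : u ^ 2 = P * a ^ 2 - σ2 * γS3) (hu0 : 0 ≤ u)
    (hv2' : v ^ 2 = Q * b ^ 2) (hv0 : 0 ≤ v)
    (hkey : ρ * (σ2 + σ2 * γS3) ≤ (u + v) ^ 2)
    (hcase : Q * b ^ 2 < ρ * (σ2 + P * a ^ 2))
    (hv2 : v2star =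
      (Real.sqrt (P * ρ * (1 + ρ) * a ^ 2 + ρ * (1 + ρ) * σ2 - ρ * Q * b ^ 2) - v) /
        (a * (1 + ρ))) :
    γS3 ≤ a ^ 2 * (P - v2star ^ 2) / σ2 := by
  set R := P * ρ * (1 + ρ) * a ^ 2 + ρ * (1 + ρ) * σ2 - ρ * Q * b ^ 2 with hR
  have hid1 : R - v ^ 2 = (1 + ρ) * (ρ * (σ2 + P * a ^ 2) - Q * b ^ 2) := by
    rw [hR]; linear_combination -hv2'
  have hRv : v ^ 2 ≤ R := by
    have h0 : 0 ≤ (1 + ρ) * (ρ * (σ2 + P * a ^ 2) - Q * b ^ 2) :=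
      mul_nonneg (by linarith) (by linarith)
    linarith [hid1, h0]
  have hR0 : 0 ≤ R := le_trans (by positivity) hRv
  have hvR : v ≤ Real.sqrt R := by
    rw [show v = Real.sqrt (v ^ 2) by rw [Real.sqrt_sq hv0]]
    exact Real.sqrt_le_sqrt hRv
  have hid2 : (v + (1 + ρ) * u) ^ 2 - R = (1 + ρ) * ((u + v) ^ 2 - ρ * (σ2 + σ2 * γS3)) := by
    rw [hR]; linear_combination ρ * (1 + ρ) * hu2 - ρ * hv2'
  have hRub : R ≤ (v + (1 + ρ) * u) ^ 2 := by
    have h1 : 0 ≤ (1 + ρ) * ((u + v) ^ 2 - ρ * (σ2 + σ2 * γS3)) :=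
      mul_nonneg (by linarith) (by linarith)
    linarith [hid2, h1]
  have hRle : Real.sqrt R ≤ v + (1 + ρ) * u := by
    have h2 := Real.sqrt_le_sqrt hRub
    rwa [Real.sqrt_sq (by nlinarith)] at h2
  have hvalv2 : a ^ 2 * v2star ^ 2 = (Real.sqrt R - v) ^ 2 / (1 + ρ) ^ 2 := by
    rw [hv2]; field_simp
  have hsq : (Real.sqrt R - v) ^ 2 ≤ ((1 + ρ) * u) ^ 2 :=
    pow_le_pow_left₀ (by linarith) (by linarith) 2
  have hfin : a ^ 2 * v2star ^ 2 ≤ u ^ 2 := by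
    rw [hvalv2, div_le_iff₀ (by positivity)]
    have h3 : ((1 + ρ) * u) ^ 2 = u ^ 2 * (1 + ρ) ^ 2 := by ring
    linarith [hsq, h3]
  rw [le_div_iff₀ hσ]
  linarith [hfin, hu2]

set_option maxHeartbeats 800000 in
/-- Main comparison result: under feasibility of scheme 4 and condition (20),
the proposed cooperative NOMA scheme 4 outperforms the interference-suppression
scheme 3, i.e., `γ*₁,S4 ≥ γ*₁,S3`. -/
theorem stmt_19 (a b P Q σ2 ρ : ℝ) (ha : 0 < a) (hb : 0 < b) (hP : 0 < P)
    (hQ : 0 < Q) (hσ : 0 < σ2) (hρ : 0 < ρ)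
    (α β W v2star γS3 γS4 : ℝ)
    (hα : α = P * a ^ 2 / σ2) (hβ : β = Q * b ^ 2 / σ2)
    (hW : W = 2 * β * (1 + α + β - Real.sqrt ((1 - α + β) ^ 2 + 4 * α)))
    (hfeas : (Real.sqrt P * a + Real.sqrt Q * b) ^ 2 ≥ ρ * σ2)
    (hcond : ρ ≤ ((1 + α + 3 * β) - Real.sqrt ((1 - α + β) ^ 2 + 4 * α) +
        2 * Real.sqrt W) /
      (1 + α - β + Real.sqrt ((1 - α + β) ^ 2 + 4 * α)))
    (hv2 : v2star =
      (Real.sqrt (P * ρ * (1 + ρ) * a ^ 2 + ρ * (1 + ρ) * σ2 - ρ * Q * b ^ 2) -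
        Real.sqrt Q * b) / (a * (1 + ρ)))
    (hγ4 : γS4 = if Q * b ^ 2 / (σ2 + P * a ^ 2) ≥ ρ
      then P * a ^ 2 / σ2
      else a ^ 2 * (P - v2star ^ 2) / σ2)
    (hγ3 : γS3 = (-(σ2 + Q * b ^ 2 - P * a ^ 2) +
      Real.sqrt ((σ2 + Q * b ^ 2 - P * a ^ 2) ^ 2 + 4 * σ2 * P * a ^ 2)) /
      (2 * σ2)) :
    γS4 ≥ γS3 := by
  have hσ' : σ2 ≠ 0 := ne_of_gt hσ
  obtain ⟨hquad, hg0, hgle⟩ := stmt19_aux a b P Q σ2 ha hb hP hQ hσ γS3 hγ3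
  have hrad : (0:ℝ) ≤ (σ2 + Q * b ^ 2 - P * a ^ 2) ^ 2 + 4 * σ2 * P * a ^ 2 := by positivity
  rw [hγ4]
  by_cases hcase : Q * b ^ 2 / (σ2 + P * a ^ 2) ≥ ρ
  · rw [if_pos hcase, ge_iff_le, le_div_iff₀ hσ]
    linarith [hgle]
  · rw [if_neg hcase]
    rw [ge_iff_le, not_le, div_lt_iff₀ (by positivity)] at hcase
    -- relate the sqrt in hcond to γS3
    have hr : Real.sqrt ((1 - α + β) ^ 2 + 4 * α)
        = Real.sqrt ((σ2 + Q * b ^ 2 - P * a ^ 2) ^ 2 + 4 * σ2 * P * a ^ 2) / σ2 := by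
      rw [show (1 - α + β) ^ 2 + 4 * α
          = ((σ2 + Q * b ^ 2 - P * a ^ 2) ^ 2 + 4 * σ2 * P * a ^ 2) / σ2 ^ 2 by
        rw [hα, hβ]; field_simp; ring,
        Real.sqrt_div hrad, Real.sqrt_sq hσ.le]
    have hs : Real.sqrt ((1 - α + β) ^ 2 + 4 * α) = 2 * γS3 + 1 + β - α := by
      rw [hr, hγ3, hβ, hα]; field_simp; ring
    set p := Real.sqrt (α - γS3) with hp
    set q := Real.sqrt β with hq
    have hαg : 0 ≤ α - γS3 := by
      rw [hα]
      have h2 : γS3 ≤ P * a ^ 2 / σ2 := by rw [le_div_iff₀ hσ]; linarith [hgle]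
      linarith
    have hβ0 : 0 ≤ β := by rw [hβ]; positivity
    have hp2 : p ^ 2 = α - γS3 := Real.sq_sqrt hαg
    have hq2 : q ^ 2 = β := Real.sq_sqrt hβ0
    have hp0 : 0 ≤ p := Real.sqrt_nonneg _
    have hq0 : 0 ≤ q := Real.sqrt_nonneg _
    have hWval : Real.sqrt W = 2 * (q * p) := by
      rw [hW, hs, show 2 * β * (1 + α + β - (2 * γS3 + 1 + β - α)) = 2 ^ 2 * (β * (α - γS3)) by
          ring,
        Real.sqrt_mul (by norm_num : (0:ℝ) ≤ (2:ℝ) ^ 2), Real.sqrt_sq (by norm_num : (0:ℝ) ≤ 2),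
        Real.sqrt_mul hβ0]
    have hden : (0:ℝ) < 1 + α - β + Real.sqrt ((1 - α + β) ^ 2 + 4 * α) := by
      rw [hs]; linarith
    have hexp : (p + q) ^ 2 = (α - γS3) + β + 2 * (q * p) := by
      linear_combination hp2 + hq2
    have hcond' : ρ * (1 + γS3) ≤ (p + q) ^ 2 := by
      rw [le_div_iff₀ hden, hs, hWval] at hcond
      linarith [hcond, hexp]
    set u := Real.sqrt (P * a ^ 2 - σ2 * γS3) with hu
    set v := Real.sqrt Q * b with hv
    have hu2 : u ^ 2 = P * a ^ 2 - σ2 * γS3 := Real.sq_sqrt (by linarith)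
    have hv2' : v ^ 2 = Q * b ^ 2 := by
      rw [hv, mul_pow, Real.sq_sqrt hQ.le]
    have hu0 : 0 ≤ u := Real.sqrt_nonneg _
    have hv0 : 0 ≤ v := by positivity
    have huval : u = Real.sqrt σ2 * p := by
      rw [hu, hp, ← Real.sqrt_mul hσ.le, hα]
      congr 1; field_simp
    have hvval : v = Real.sqrt σ2 * q := by
      rw [hv, hq, ← Real.sqrt_mul hσ.le, hβ,
        show σ2 * (Q * b ^ 2 / σ2) = Q * b ^ 2 by field_simp,
        Real.sqrt_mul hQ.le, Real.sqrt_sq hb.le]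
    have hσsq : Real.sqrt σ2 ^ 2 = σ2 := Real.sq_sqrt hσ.le
    have hkey : ρ * (σ2 + σ2 * γS3) ≤ (u + v) ^ 2 := by
      rw [huval, hvval]
      calc ρ * (σ2 + σ2 * γS3) = σ2 * (ρ * (1 + γS3)) := by ring
        _ ≤ σ2 * (p + q) ^ 2 := mul_le_mul_of_nonneg_left hcond' hσ.le
        _ = (Real.sqrt σ2 * p + Real.sqrt σ2 * q) ^ 2 := by
            linear_combination -(p + q) ^ 2 * hσsq
    exact stmt19_aux2 a b P Q σ2 ρ γS3 u v v2star ha hσ hρ hg0 hu2 hu0 hv2' hv0 hkey hcase hv2
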